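/- Let n ≥ 1 and for each k ∈ Fin n let ψ_k ∈ ℂ² be a unit vector, and let each party k have two measurements given by orthonormal bases {u_{k,i,0}, u_{k,i,1}} of ℂ² for i ∈ Fin 2. Consider the measurement scenario with X = Fin n × Fin 2 (measurement (k,i) is party k's i-th basis), O = Fin 2, and contexts C_c = {(k, c(k)) : k ∈ Fin n} for each choice function c : Fin n → Fin 2. Then the Born-rule empirical model of the product state ⊗_k ψ_k, given by e_{C_c}(s) = |⟨⊗_k u_{k, c(k), s(k)}, ⊗_k ψ_k⟩|² = Π_k |⟨u_{k,c(k),s(k)}, ψ_k⟩|², is noncontextual: there exists a probability distribution d on the global assignments g : Fin n × Fin 2 → Fin 2 whose marginal to each context C_c equals e_{C_c}. -/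

import Mathlib

/-!
STATEMENT 1: In an `(n,2,2)` Bell-type scenario (measurements `X = Fin n × Fin 2`,
outcomes `O = Fin 2`, contexts `C_c = {(k, c k) : k}` for choice functions `c`),
the Born-rule empirical model of a product state `⊗_k ψ_k` is noncontextual.
-/

open scoped ComplexConjugate

/-- Standard Hermitian inner product on `ℂ²` (conjugate-linear in the first slot). -/
noncomputable def ip2 (u v : Fin 2 → ℂ) : ℂ := ∑ i, conj (u i) * v i

/-- `n`-fold tensor product of vectors in `ℂ²`, as a function on `Fin n → Fin 2`. -/
noncomputable def tensN (n : ℕ) (v : Fin n → Fin 2 → ℂ) : (Fin n → Fin 2) → ℂ :=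
  fun f => ∏ k, v k (f k)

/-- Standard Hermitian inner product on `(ℂ²)^{⊗ n}` (conjugate-linear in the
first slot). -/
noncomputable def ipN (n : ℕ) (u v : (Fin n → Fin 2) → ℂ) : ℂ :=
  ∑ f, conj (u f) * v f

open scoped Matrix in
lemma ipN_tensN_aux (n : ℕ) (a b : Fin n → Fin 2 → ℂ) :
    ipN n (tensN n a) (tensN n b) = ∏ k, ip2 (a k) (b k) := by
  unfold ipN tensN ip2
  rw [Finset.prod_univ_sum, Fintype.piFinset_univ]
  apply Finset.sum_congr rfl
  intro f _
  rw [map_prod, ← Finset.prod_mul_distrib]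

open scoped Matrix in
lemma ip2_complete_aux (u : Fin 2 → Fin 2 → ℂ)
    (hu : ∀ s t, ip2 (u s) (u t) = if s = t then 1 else 0) :
    ∀ j l, (∑ t, u t j * conj (u t l)) = if j = l then 1 else 0 := by
  have hM : (Matrix.of fun s j => conj (u s j)) * (Matrix.of fun s j => conj (u s j))ᴴ = 1 := by
    ext s t
    have h := hu s t
    simp only [ip2] at h
    simp only [Matrix.mul_apply, Matrix.conjTranspose_apply, Matrix.of_apply,
      Complex.conj_conj, Matrix.one_apply, Complex.star_def]
    rw [← h]
  have hM2 := mul_eq_one_comm.mp hM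
  intro j l
  have := congrFun (congrFun hM2 j) l
  simp only [Matrix.mul_apply, Matrix.conjTranspose_apply, Matrix.of_apply,
    Complex.conj_conj, Matrix.one_apply, Complex.star_def] at this
  rw [← this]

lemma parseval_aux (u : Fin 2 → Fin 2 → ℂ) (ψ : Fin 2 → ℂ)
    (hu : ∀ s t, ip2 (u s) (u t) = if s = t then 1 else 0) :
    ∑ t, ‖ip2 (u t) ψ‖ ^ 2 = ∑ j, ‖ψ j‖ ^ 2 := by
  have hc := ip2_complete_aux u hu
  have key : (∑ t, (ip2 (u t) ψ) * conj (ip2 (u t) ψ)) = ∑ j, ψ j * conj (ψ j) := by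
    have h00 := hc 0 0; have h01 := hc 0 1; have h10 := hc 1 0; have h11 := hc 1 1
    simp only [Fin.sum_univ_two, if_true, if_false, Fin.zero_eq_one_iff, Fin.one_eq_zero_iff,
      ite_true, ite_false, show ((0:Fin 2) = 1) = False by simp, show ((1:Fin 2) = 0) = False by simp,
      eq_self_iff_true] at h00 h01 h10 h11 ⊢
    simp only [ip2, Fin.sum_univ_two, map_add, map_mul, Complex.conj_conj]
    linear_combination (conj (ψ 0) * ψ 0) * h00 + (conj (ψ 0) * ψ 1) * h01 +
      (conj (ψ 1) * ψ 0) * h10 + (conj (ψ 1) * ψ 1) * h11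
  have : ((∑ t, ‖ip2 (u t) ψ‖ ^ 2 : ℝ) : ℂ) = ((∑ j, ‖ψ j‖ ^ 2 : ℝ) : ℂ) := by
    push_cast
    simpa only [Complex.mul_conj, Complex.normSq_eq_norm_sq,
      Complex.ofReal_pow] using key
  exact_mod_cast this

lemma prod_fin2_pt_aux {M : Type*} [CommMonoid M] (f : Fin 2 → M) (j : Fin 2) :
    ∏ i, f i = f j * f (j + 1) := by
  fin_cases j <;> simp [Fin.prod_univ_two] <;> exact mul_comm _ _

theorem product_state_born_model_noncontextual
    (n : ℕ) (hn : 1 ≤ n)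
    (ψ : Fin n → Fin 2 → ℂ) (hψ : ∀ k, ∑ i, ‖ψ k i‖ ^ 2 = 1)
    (u : Fin n → Fin 2 → Fin 2 → Fin 2 → ℂ)
    (hu : ∀ k i s t, ip2 (u k i s) (u k i t) = if s = t then 1 else 0) :
    ∃ d : (Fin n × Fin 2 → Fin 2) → ℝ,
      (∀ g, 0 ≤ d g) ∧ (∑ g, d g) = 1 ∧
      ∀ c s : Fin n → Fin 2,
        (∑ g ∈ Finset.univ.filter
            (fun g : Fin n × Fin 2 → Fin 2 => ∀ k, g (k, c k) = s k), d g)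
          = ‖ipN n (tensN n (fun k => u k (c k) (s k))) (tensN n ψ)‖ ^ 2 ∧
        ‖ipN n (tensN n (fun k => u k (c k) (s k))) (tensN n ψ)‖ ^ 2
          = ∏ k, ‖ip2 (u k (c k) (s k)) (ψ k)‖ ^ 2 := by
  -- single-site Born probabilities
  set q : Fin n → Fin 2 → Fin 2 → ℝ := fun k i t => ‖ip2 (u k i t) (ψ k)‖ ^ 2 with hqdef
  have hq0 : ∀ k i t, 0 ≤ q k i t := fun k i t => by positivity
  have hq1 : ∀ k i, ∑ t, q k i t = 1 := fun k i => by
    simp only [hqdef]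
    rw [parseval_aux (u k i) (ψ k) (hu k i)]
    exact hψ k
  refine ⟨fun g => ∏ x : Fin n × Fin 2, q x.1 x.2 (g x), fun g => by positivity, ?_, ?_⟩
  · -- normalization
    rw [← Fintype.piFinset_univ, ← Finset.prod_univ_sum]
    simp [hq1]
  · intro c s
    -- the Born rule factorization
    have hfact : ‖ipN n (tensN n (fun k => u k (c k) (s k))) (tensN n ψ)‖ ^ 2
        = ∏ k, ‖ip2 (u k (c k) (s k)) (ψ k)‖ ^ 2 := by
      rw [ipN_tensN_aux, norm_prod, Finset.prod_pow]
    refine ⟨?_, hfact⟩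
    rw [hfact]
    -- rewrite the filtered sum
    have hflip : ∀ i j : Fin 2, j ≠ i → j = i + 1 := by decide
    have hflip' : ∀ i : Fin 2, i + 1 ≠ i := by decide
    -- the equivalence splitting g into (context part, complement part)
    let E : (Fin n × Fin 2 → Fin 2) ≃ (Fin n → Fin 2) × (Fin n → Fin 2) :=
      { toFun := fun g => (fun k => g (k, c k), fun k => g (k, c k + 1))
        invFun := fun ab x => if x.2 = c x.1 then ab.1 x.1 else ab.2 x.1
        left_inv := by
          intro g
          funext x
          obtain ⟨k, i⟩ := x
          by_cases h : i = c k
          · simp [h]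
          · simp only [h, if_false]
            rw [hflip (c k) i h]
        right_inv := by
          intro ab
          refine Prod.ext ?_ ?_ <;> funext k <;> simp [hflip' (c k)] }
    rw [Finset.sum_filter]
    rw [← Equiv.sum_comp E.symm
      (fun g => if (∀ k, g (k, c k) = s k) then ∏ x : Fin n × Fin 2, q x.1 x.2 (g x) else 0)]
    have hsymm : ∀ ab : (Fin n → Fin 2) × (Fin n → Fin 2),
        (if (∀ k, E.symm ab (k, c k) = s k)
          then ∏ x : Fin n × Fin 2, q x.1 x.2 (E.symm ab x) else 0)
        = if ab.1 = s then ∏ k, (q k (c k) (ab.1 k) * q k (c k + 1) (ab.2 k)) else 0 := by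
      intro ab
      have h1 : ∀ k, E.symm ab (k, c k) = ab.1 k := by intro k; simp [E]
      have h2 : ∀ k, E.symm ab (k, c k + 1) = ab.2 k := by
        intro k; simp [E, hflip' (c k)]
      have hcond : (∀ k, E.symm ab (k, c k) = s k) ↔ ab.1 = s := by
        simp only [h1]; exact funext_iff.symm
      rw [if_congr hcond rfl rfl]
      congr 1
      rw [Fintype.prod_prod_type]
      apply Finset.prod_congr rfl
      intro k _
      rw [prod_fin2_pt_aux (fun i => q k i (E.symm ab (k, i))) (c k), h1, h2]
    rw [Finset.sum_congr rfl (fun ab _ => hsymm ab)]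
    rw [Fintype.sum_prod_type]
    rw [Finset.sum_eq_single s]
    · have step : ∀ b : Fin n → Fin 2,
          (if ((s, b).1 : Fin n → Fin 2) = s
            then ∏ k, (q k (c k) ((s, b).1 k) * q k (c k + 1) ((s, b).2 k)) else 0)
            = (∏ k, q k (c k) (s k)) * ∏ k, q k (c k + 1) (b k) := by
        intro b
        rw [if_pos rfl]
        exact Finset.prod_mul_distrib
      rw [Finset.sum_congr rfl (fun b _ => step b), ← Finset.mul_sum,
        ← Fintype.piFinset_univ, ← Finset.prod_univ_sum]
      rw [Finset.prod_congr rfl (fun k _ => hq1 k (c k + 1)), Finset.prod_const_one, mul_one]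
    · intro a _ ha
      simp [ha]
    · intro h
      exact absurd (Finset.mem_univ s) h
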